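/- Let N ≥ 2, let κ₁,…,κ_N be strictly positive reals, κ' = diag(κ₁,…,κ_{N−1}), κ'' = κ_N, κ = diag(κ',κ''). Let Q₀ = (q⁰₁,…,q⁰_{N−1}) be a real row vector (a 1×(N−1) matrix) and Q(r) = e^{κ_N r} Q₀ e^{−κ'r}, with entries q_i(r) = q⁰_i e^{(κ_N − κ_i)r}. Define C = [[I,0],[Q₀,0]], D = [[0,−Q₀ᵀ],[0,1]] and σ(r) = κ^{−1/2}(e^{κr}C + e^{−κr}D). Then for every r, σ(r) is invertible and the superpotential satisfies U(r) = σ'(r)σ(r)⁻¹ = κ − (2/(1 + Q(r)Q(r)ᵀ)) κ^{1/2} [[QᵀQ, −Qᵀ],[−Q, 1]] κ^{1/2}, where QᵀQ is the (N−1)×(N−1) matrix with entries q_i q_j and QQᵀ = Σ q_i² is a scalar. -/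

import Mathlib

open Matrix

/-- Paper's Corollary 2, first formula (59): the rank `C = N - 1` case with `X₀ = 0`,
where `Q(r) = e^{κ_N r}Q₀e^{-κ'r}` is a row. Then `σ(r)` is invertible for all `r` and
`U(r) = κ - (2/(1 + QQᵀ))κ^{1/2}[[QᵀQ, -Qᵀ],[-Q, 1]]κ^{1/2}`. -/
theorem cor2_row_superpotential
    (N : ℕ) (hN : 2 ≤ N)
    (κ' : Fin (N - 1) → ℝ) (κN : ℝ)
    (hκ' : ∀ i, 0 < κ' i) (hκN : 0 < κN)
    (Q₀ : Matrix (Fin 1) (Fin (N - 1)) ℝ) :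
    let κv : Fin (N - 1) ⊕ Fin 1 → ℝ := Sum.elim κ' fun _ => κN
    let C : Matrix (Fin (N - 1) ⊕ Fin 1) (Fin (N - 1) ⊕ Fin 1) ℝ :=
      fromBlocks 1 0 Q₀ 0
    let D : Matrix (Fin (N - 1) ⊕ Fin 1) (Fin (N - 1) ⊕ Fin 1) ℝ :=
      fromBlocks 0 (-Q₀ᵀ) 0 1
    let σ : ℝ → Matrix (Fin (N - 1) ⊕ Fin 1) (Fin (N - 1) ⊕ Fin 1) ℝ := fun s =>
      diagonal (fun i => (Real.sqrt (κv i))⁻¹) *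
        (diagonal (fun i => Real.exp (κv i * s)) * C +
          diagonal (fun i => Real.exp (-(κv i) * s)) * D)
    let σd : ℝ → Matrix (Fin (N - 1) ⊕ Fin 1) (Fin (N - 1) ⊕ Fin 1) ℝ := fun s =>
      Matrix.of fun i j => deriv (fun t => σ t i j) s
    let Q : ℝ → Matrix (Fin 1) (Fin (N - 1)) ℝ := fun r =>
      diagonal (fun _ : Fin 1 => Real.exp (κN * r)) * Q₀ *
        diagonal (fun i => Real.exp (-(κ' i) * r))
    ∀ r : ℝ,
      IsUnit (σ r) ∧
      σd r * (σ r)⁻¹ =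
        diagonal κv -
          (2 / (1 + (Q r * (Q r)ᵀ) 0 0)) •
            (diagonal (fun i => Real.sqrt (κv i)) *
              fromBlocks ((Q r)ᵀ * Q r) (-(Q r)ᵀ) (-(Q r)) 1 *
              diagonal (fun i => Real.sqrt (κv i))) := by
  intro κv C D σ σd Q r
  set Qr : Matrix (Fin 1) (Fin (N - 1)) ℝ := Q r with hQrdef
  set s : ℝ := (Qr * Qrᵀ) 0 0 with hs
  -- small diagonal blocks
  set eP : Matrix (Fin (N-1)) (Fin (N-1)) ℝ := diagonal (fun i => Real.exp (κ' i * r)) with heP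
  set eM : Matrix (Fin (N-1)) (Fin (N-1)) ℝ := diagonal (fun i => Real.exp (-(κ' i) * r)) with heM
  set fP : Matrix (Fin 1) (Fin 1) ℝ := diagonal (fun _ => Real.exp (κN * r)) with hfP
  set fM : Matrix (Fin 1) (Fin 1) ℝ := diagonal (fun _ => Real.exp (-κN * r)) with hfM
  set sP : Matrix (Fin (N-1)) (Fin (N-1)) ℝ := diagonal (fun i => Real.sqrt (κ' i)) with hsP
  set sPi : Matrix (Fin (N-1)) (Fin (N-1)) ℝ := diagonal (fun i => (Real.sqrt (κ' i))⁻¹) with hsPi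
  set sN : Matrix (Fin 1) (Fin 1) ℝ := diagonal (fun _ => Real.sqrt κN) with hsN
  set sNi : Matrix (Fin 1) (Fin 1) ℝ := diagonal (fun _ => (Real.sqrt κN)⁻¹) with hsNi
  -- scalar facts
  have hsqP : ∀ i, Real.sqrt (κ' i) ≠ 0 := fun i => ne_of_gt (Real.sqrt_pos.mpr (hκ' i))
  have hsqN : Real.sqrt κN ≠ 0 := ne_of_gt (Real.sqrt_pos.mpr hκN)
  have hs0 : 0 ≤ s := by
    have : s = ∑ k, Qr 0 k * Qr 0 k := by
      rw [hs, Matrix.mul_apply]; simp [Matrix.transpose_apply]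
    rw [this]; exact Finset.sum_nonneg fun k _ => mul_self_nonneg _
  have hcne : (1 : ℝ) + s ≠ 0 := by positivity
  -- diagonal relations
  have expPM : ∀ x : ℝ, Real.exp (x * r) * Real.exp (-x * r) = 1 := by
    intro x; rw [← Real.exp_add]; ring_nf; exact Real.exp_zero
  have expMP : ∀ x : ℝ, Real.exp (-x * r) * Real.exp (x * r) = 1 := by
    intro x; rw [← Real.exp_add]; ring_nf; exact Real.exp_zero
  have hPM : eP * eM = 1 := by
    rw [heP, heM, diagonal_mul_diagonal,
      show (fun i => Real.exp (κ' i * r) * Real.exp (-κ' i * r)) = fun _ => (1:ℝ) from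
        funext fun i => expPM (κ' i), diagonal_one]
  have hMP : eM * eP = 1 := by
    rw [heP, heM, diagonal_mul_diagonal,
      show (fun i => Real.exp (-κ' i * r) * Real.exp (κ' i * r)) = fun _ => (1:ℝ) from
        funext fun i => expMP (κ' i), diagonal_one]
  have hfPM : fP * fM = 1 := by
    rw [hfP, hfM, diagonal_mul_diagonal,
      show (fun _ : Fin 1 => Real.exp (κN * r) * Real.exp (-κN * r)) = fun _ => (1:ℝ) from
        funext fun _ => expPM κN, diagonal_one]
  have hfMP : fM * fP = 1 := by
    rw [hfP, hfM, diagonal_mul_diagonal,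
      show (fun _ : Fin 1 => Real.exp (-κN * r) * Real.exp (κN * r)) = fun _ => (1:ℝ) from
        funext fun _ => expMP κN, diagonal_one]
  have hsPiP : sPi * sP = 1 := by
    rw [hsP, hsPi, diagonal_mul_diagonal,
      show (fun i => (Real.sqrt (κ' i))⁻¹ * Real.sqrt (κ' i)) = fun _ => (1:ℝ) from
        funext fun i => inv_mul_cancel₀ (hsqP i), diagonal_one]
  have hsPPi : sP * sPi = 1 := by
    rw [hsP, hsPi, diagonal_mul_diagonal,
      show (fun i => Real.sqrt (κ' i) * (Real.sqrt (κ' i))⁻¹) = fun _ => (1:ℝ) from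
        funext fun i => mul_inv_cancel₀ (hsqP i), diagonal_one]
  have hsNiN : sNi * sN = 1 := by
    rw [hsN, hsNi, diagonal_mul_diagonal,
      show (fun _ : Fin 1 => (Real.sqrt κN)⁻¹ * Real.sqrt κN) = fun _ => (1:ℝ) from
        funext fun _ => inv_mul_cancel₀ hsqN, diagonal_one]
  have hsNNi : sN * sNi = 1 := by
    rw [hsN, hsNi, diagonal_mul_diagonal,
      show (fun _ : Fin 1 => Real.sqrt κN * (Real.sqrt κN)⁻¹) = fun _ => (1:ℝ) from
        funext fun _ => mul_inv_cancel₀ hsqN, diagonal_one]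
  have hKd : diagonal κ' * sPi = sP := by
    rw [hsP, hsPi, diagonal_mul_diagonal]
    exact congrArg _ (funext fun i => by
      rw [← div_eq_mul_inv, div_eq_iff (hsqP i), Real.mul_self_sqrt (hκ' i).le])
  have hKdN : (diagonal (fun _ : Fin 1 => κN)) * sNi = sN := by
    rw [hsN, hsNi, diagonal_mul_diagonal]
    exact congrArg _ (funext fun _ => by
      rw [← div_eq_mul_inv, div_eq_iff hsqN, Real.mul_self_sqrt hκN.le])
  -- Q relations
  have hQfac : Qr = fP * Q₀ * eM := by rw [hQrdef]
  have hQt : Qrᵀ = eM * (Q₀ᵀ * fP) := by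
    rw [hQfac, transpose_mul, transpose_mul, diagonal_transpose, diagonal_transpose]
  have hQQt : Qr * Qrᵀ = s • (1 : Matrix (Fin 1) (Fin 1) ℝ) := by
    ext i j
    fin_cases i; fin_cases j
    simp [hs, Matrix.smul_apply, Matrix.one_apply]
  -- block decomposition of diagonal κv-matrices
  have hbsqi : diagonal (fun i => (Real.sqrt (κv i))⁻¹) = fromBlocks sPi 0 0 sNi := by
    rw [hsPi, hsNi, fromBlocks_diagonal]
    try exact congrArg _ (funext fun i => by cases i <;> rfl)
  have hbsq : diagonal (fun i => Real.sqrt (κv i)) = fromBlocks sP 0 0 sN := by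
    rw [hsP, hsN, fromBlocks_diagonal]
    try exact congrArg _ (funext fun i => by cases i <;> rfl)
  have hbeP : diagonal (fun i => Real.exp (κv i * r)) = fromBlocks eP 0 0 fP := by
    rw [heP, hfP, fromBlocks_diagonal]
    try exact congrArg _ (funext fun i => by cases i <;> rfl)
  have hbeM : diagonal (fun i => Real.exp (-(κv i) * r)) = fromBlocks eM 0 0 fM := by
    rw [heM, hfM, fromBlocks_diagonal]
    try exact congrArg _ (funext fun i => by cases i <;> rfl)
  have hbκ : diagonal κv = fromBlocks (diagonal κ') 0 0 (diagonal (fun _ : Fin 1 => κN)) := by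
    rw [fromBlocks_diagonal]
    try exact congrArg _ (funext fun i => by cases i <;> rfl)
  -- block form of σ r
  have hσb : σ r = fromBlocks (sPi * eP) (-(sPi * (eM * Q₀ᵀ))) (sNi * (fP * Q₀)) (sNi * fM) := by
    show diagonal (fun i => (Real.sqrt (κv i))⁻¹) *
        (diagonal (fun i => Real.exp (κv i * r)) * C +
          diagonal (fun i => Real.exp (-(κv i) * r)) * D) = _
    rw [hbsqi, hbeP, hbeM]
    simp [C, D, fromBlocks_multiply, fromBlocks_add, Matrix.mul_assoc]
  -- entrywise formula for σ
  have hσe : ∀ (t : ℝ) i j, σ t i j =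
      (Real.sqrt (κv i))⁻¹ * (Real.exp (κv i * t) * C i j + Real.exp (-(κv i) * t) * D i j) := by
    intro t i j
    simp [σ, Matrix.mul_apply, Matrix.diagonal_apply, Finset.sum_ite_eq, mul_add]
  -- entrywise derivative
  have hder : ∀ i j, σd r i j =
      Real.sqrt (κv i) * (Real.exp (κv i * r) * C i j - Real.exp (-(κv i) * r) * D i j) := by
    intro i j
    have hk : 0 < κv i := by rcases i with i | i; exacts [hκ' i, hκN]
    have hne : Real.sqrt (κv i) ≠ 0 := ne_of_gt (Real.sqrt_pos.mpr hk)
    have hfun : (fun t => σ t i j) = fun t =>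
        (Real.sqrt (κv i))⁻¹ * (Real.exp (κv i * t) * C i j + Real.exp (-(κv i) * t) * D i j) :=
      funext fun t => hσe t i j
    have h1 : HasDerivAt (fun t : ℝ => Real.exp (κv i * t)) (κv i * Real.exp (κv i * r)) r := by
      simpa [mul_comm] using ((hasDerivAt_id r).const_mul (κv i)).exp
    have h2 : HasDerivAt (fun t : ℝ => Real.exp (-(κv i) * t))
        (-(κv i) * Real.exp (-(κv i) * r)) r := by
      simpa [mul_comm] using ((hasDerivAt_id r).const_mul (-(κv i))).exp
    have hd : HasDerivAt (fun t =>
        (Real.sqrt (κv i))⁻¹ * (Real.exp (κv i * t) * C i j + Real.exp (-(κv i) * t) * D i j))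
        ((Real.sqrt (κv i))⁻¹ * ((κv i * Real.exp (κv i * r)) * C i j +
          (-(κv i) * Real.exp (-(κv i) * r)) * D i j)) r :=
      ((h1.mul_const _).add (h2.mul_const _)).const_mul _
    have : σd r i j = (Real.sqrt (κv i))⁻¹ * ((κv i * Real.exp (κv i * r)) * C i j +
        (-(κv i) * Real.exp (-(κv i) * r)) * D i j) := by
      show deriv (fun t => σ t i j) r = _
      rw [hfun, hd.deriv]
    rw [this]
    set A := Real.exp (κv i * r) with hA
    set B := Real.exp (-(κv i) * r) with hB
    field_simp
    linear_combination (B * D i j - A * C i j) * Real.mul_self_sqrt hk.le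
  -- block form of σd r
  have hσdb : σd r = fromBlocks (sP * eP) (sP * (eM * Q₀ᵀ)) (sN * (fP * Q₀)) (-(sN * fM)) := by
    ext i j
    rw [hder i j]
    rcases i with i | i <;> rcases j with j | j <;>
      simp [κv, C, D, heP, heM, hfP, hfM, hsP, hsN, fromBlocks, Matrix.diagonal_apply,
        Matrix.mul_apply, Matrix.one_apply, Finset.sum_ite_eq, mul_comm, mul_sub]
    all_goals try split_ifs
    all_goals try ring
    all_goals (rename_i h; exact absurd (Subsingleton.elim _ _) h)
  -- assoc helper lemmas
  have hePeM : ∀ {p : Type} (X : Matrix (Fin (N-1)) p ℝ), eP * (eM * X) = X := by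
    intro p X; rw [← Matrix.mul_assoc, hPM, Matrix.one_mul]
  have hfMfP : ∀ {p : Type} (X : Matrix (Fin 1) p ℝ), fM * (fP * X) = X := by
    intro p X; rw [← Matrix.mul_assoc, hfMP, Matrix.one_mul]
  have hQtX : ∀ {p : Type} (X : Matrix (Fin 1) p ℝ), eM * (Q₀ᵀ * (fP * X)) = Qrᵀ * X := by
    intro p X; rw [hQt, Matrix.mul_assoc, Matrix.mul_assoc]
  have hQrX : ∀ {p : Type} (X : Matrix (Fin (N-1)) p ℝ), fP * (Q₀ * (eM * X)) = Qr * X := by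
    intro p X; rw [hQfac, Matrix.mul_assoc, Matrix.mul_assoc]
  have hQQX : ∀ {p : Type} (X : Matrix (Fin 1) p ℝ), Qr * (Qrᵀ * X) = s • X := by
    intro p X; rw [← Matrix.mul_assoc, hQQt, Matrix.smul_mul, Matrix.one_mul]
  -- explicit right inverse of σ r
  set T : Matrix (Fin (N - 1) ⊕ Fin 1) (Fin (N - 1) ⊕ Fin 1) ℝ := fromBlocks
      ((eM - (1+s)⁻¹ • (eM * (Qrᵀ * Qr))) * sP)
      ((1+s)⁻¹ • (eM * (Qrᵀ * sN)))
      (-((1+s)⁻¹ • (fP * (Qr * sP))))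
      ((1+s)⁻¹ • (fP * sN)) with hT
  have hσT : σ r * T = 1 := by
    rw [hσb, hT, fromBlocks_multiply, ← fromBlocks_one, fromBlocks_inj]
    refine ⟨?_, ?_, ?_, ?_⟩
    · simp only [Matrix.sub_mul, Matrix.mul_sub, Matrix.neg_mul, Matrix.mul_neg, neg_neg,
        Matrix.smul_mul, Matrix.mul_smul, Matrix.mul_assoc]
      simp only [hePeM, hQtX, hsPiP]
      module
    · simp only [Matrix.sub_mul, Matrix.mul_sub, Matrix.neg_mul, Matrix.mul_neg, neg_neg,
        Matrix.smul_mul, Matrix.mul_smul, Matrix.mul_assoc]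
      simp only [hePeM, hQtX]
      module
    · simp only [Matrix.sub_mul, Matrix.mul_sub, Matrix.neg_mul, Matrix.mul_neg, neg_neg,
        Matrix.smul_mul, Matrix.mul_smul, Matrix.mul_assoc]
      simp only [hQrX, hfMfP, hQQX, Matrix.mul_smul, smul_smul]
      match_scalars <;> (field_simp; try ring)
    · simp only [Matrix.sub_mul, Matrix.mul_sub, Matrix.neg_mul, Matrix.mul_neg, neg_neg,
        Matrix.smul_mul, Matrix.mul_smul, Matrix.mul_assoc]
      simp only [hQrX, hfMfP, hQQX, Matrix.mul_smul, smul_smul, hsNiN]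
      match_scalars <;> (field_simp; try ring)
  -- more assoc helpers
  have hKdX : ∀ {p : Type} (X : Matrix (Fin (N-1)) p ℝ), diagonal κ' * (sPi * X) = sP * X := by
    intro p X; rw [← Matrix.mul_assoc, hKd]
  have hKdNX : ∀ {p : Type} (X : Matrix (Fin 1) p ℝ),
      (diagonal (fun _ : Fin 1 => κN)) * (sNi * X) = sN * X := by
    intro p X; rw [← Matrix.mul_assoc, hKdN]
  have hsPsPiX : ∀ {p : Type} (X : Matrix (Fin (N-1)) p ℝ), sP * (sPi * X) = X := by
    intro p X; rw [← Matrix.mul_assoc, hsPPi, Matrix.one_mul]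
  have hsNsNiX : ∀ {p : Type} (X : Matrix (Fin 1) p ℝ), sN * (sNi * X) = X := by
    intro p X; rw [← Matrix.mul_assoc, hsNNi, Matrix.one_mul]
  have hQreP : Qr * eP = fP * Q₀ := by
    rw [hQfac, Matrix.mul_assoc, hMP, Matrix.mul_one]
  have hQtfM : eM * Q₀ᵀ = Qrᵀ * fM := by
    rw [hQt, Matrix.mul_assoc, Matrix.mul_assoc, hfPM, Matrix.mul_one]
  -- the key identity
  have key : σd r = (diagonal κv -
      (2 / (1 + s)) • (diagonal (fun i => Real.sqrt (κv i)) *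
        fromBlocks (Qrᵀ * Qr) (-Qrᵀ) (-Qr) 1 *
        diagonal (fun i => Real.sqrt (κv i)))) * σ r := by
    rw [hσdb, hσb, hbκ, hbsq, sub_eq_add_neg]
    simp only [fromBlocks_multiply, fromBlocks_smul, fromBlocks_neg, fromBlocks_add,
      Matrix.mul_zero, Matrix.zero_mul, add_zero, zero_add, Matrix.mul_one, Matrix.one_mul,
      neg_zero, smul_zero]
    rw [fromBlocks_inj]
    refine ⟨?_, ?_, ?_, ?_⟩ <;>
    · simp only [Matrix.add_mul, Matrix.neg_mul, Matrix.mul_neg, neg_neg, Matrix.smul_mul,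
        Matrix.mul_smul, Matrix.mul_assoc, Matrix.mul_one, Matrix.one_mul, Matrix.mul_zero,
        Matrix.zero_mul, add_zero, zero_add]
      simp only [hKdX, hKdNX, hsPsPiX, hsNsNiX, hQtfM, hQreP, hQQX, Matrix.mul_smul, smul_smul]
      match_scalars <;> (field_simp; try ring)
  -- assembly
  have hinv : (σ r)⁻¹ = T := Matrix.inv_eq_right_inv hσT
  constructor
  · have := invertibleOfRightInverse _ _ hσT
    exact isUnit_of_invertible _
  · rw [hinv, key, Matrix.mul_assoc, hσT, Matrix.mul_one]
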